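/- Let λ > 0, let V : ℕ → ℝ be bounded, and let r : ℕ → ℝ be nondecreasing with 0 ≤ r n ≤ 1 for all n. Assume for every m ∈ ℕ that V m ≤ (1/(1+λ)) · r m + (λ/(1+λ)) · V (m+1). Then V 0 ≤ ⨆ n, r n. -/

import Mathlib

theorem discounted_lower_bound (lam : ℝ) (hlam : 0 < lam) (V r : ℕ → ℝ)
    (hV : ∃ C, ∀ n, |V n| ≤ C) (hmono : Monotone r)
    (h0 : ∀ n, 0 ≤ r n) (h1 : ∀ n, r n ≤ 1)
    (h : ∀ m : ℕ, V m ≤ (1 / (1 + lam)) * r m + (lam / (1 + lam)) * V (m + 1)) :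
    V 0 ≤ ⨆ n, r n := by
  obtain ⟨C, hC⟩ := hV
  have hpos : (0:ℝ) < 1 + lam := by linarith
  set q : ℝ := lam / (1 + lam) with hq
  have hq0 : 0 < q := div_pos hlam hpos
  have hq1 : q < 1 := (div_lt_one hpos).2 (by linarith)
  have hqc : 1 / (1 + lam) = 1 - q := by
    field_simp [hq]
    have hlq : (1 + lam) * q = lam := by rw [hq]; field_simp
    linarith
  set S : ℝ := ⨆ n, r n with hS
  have hbdd : BddAbove (Set.range r) := ⟨1, by rintro _ ⟨n, rfl⟩; exact h1 n⟩
  have hrS : ∀ n, r n ≤ S := fun n => le_ciSup hbdd n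
  -- key induction
  have key : ∀ m, V 0 ≤ (1 - q ^ m) * S + q ^ m * V m := by
    intro m
    induction m with
    | zero => simp
    | succ m ih =>
      have hqm : 0 ≤ q ^ m := le_of_lt (pow_pos hq0 m)
      have step : V m ≤ (1 - q) * S + q * V (m + 1) := by
        have := h m
        rw [hqc] at this
        nlinarith [hrS m, hq0, hq1]
      calc V 0 ≤ (1 - q ^ m) * S + q ^ m * V m := ih
        _ ≤ (1 - q ^ m) * S + q ^ m * ((1 - q) * S + q * V (m + 1)) := by nlinarith
        _ = (1 - q ^ (m + 1)) * S + q ^ (m + 1) * V (m + 1) := by ring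
  -- take limit
  have htend : Filter.Tendsto (fun m => (1 - q ^ m) * S + q ^ m * V m)
      Filter.atTop (nhds S) := by
    have hq' : |q| < 1 := by rw [abs_of_pos hq0]; exact hq1
    have hpow : Filter.Tendsto (fun m => q ^ m) Filter.atTop (nhds 0) :=
      tendsto_pow_atTop_nhds_zero_of_abs_lt_one hq'
    have h1' : Filter.Tendsto (fun m => (1 - q ^ m) * S) Filter.atTop (nhds S) := by
      have := ((tendsto_const_nhds (x := (1:ℝ))).sub hpow).mul
        (tendsto_const_nhds (x := S))
      simpa using this
    have h2' : Filter.Tendsto (fun m => q ^ m * V m) Filter.atTop (nhds 0) := by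
      apply squeeze_zero_norm (a := fun m => q ^ m * C)
      · intro n
        have hqm : 0 ≤ q ^ n := le_of_lt (pow_pos hq0 n)
        have := hC n
        rw [Real.norm_eq_abs, abs_mul, abs_of_nonneg hqm]
        exact mul_le_mul_of_nonneg_left ((abs_le).mp this |> fun h => by
          have := hC n; nlinarith [abs_nonneg (V n)]) hqm
      · simpa using hpow.mul (tendsto_const_nhds (x := C))
    simpa using h1'.add h2'
  exact ge_of_tendsto' htend key
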